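/- Let 1 ≤ k ≤ n be an integer and let λ ∈ Γ_k satisfy λ_1 ≥ λ_2 ≥ ⋯ ≥ λ_n. Then λ_1 · σ_{k-1}(λ|1) ≥ (k/n) · σ_k(λ). -/

import Mathlib

/-- The `k`-th elementary symmetric function of `x` restricted to the index set `s`. -/
noncomputable def sigmaEOn {ι : Type*} [DecidableEq ι] (s : Finset ι) (k : ℕ) (x : ι → ℝ) : ℝ :=
  ∑ t ∈ s.powersetCard k, ∏ i ∈ t, x i

/-- The `k`-th elementary symmetric function `σ_k(x)`. -/
noncomputable def sigmaE {ι : Type*} [Fintype ι] [DecidableEq ι] (k : ℕ) (x : ι → ℝ) : ℝ :=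
  sigmaEOn Finset.univ k x

/-- The Gårding cone `Γ_k ⊆ ℝ^n`. -/
def gardingCone (n k : ℕ) : Set (Fin n → ℝ) :=
  {lam | ∀ j : ℕ, 1 ≤ j → j ≤ k → 0 < sigmaE j lam}

open Finset Polynomial

section basic
variable {ι : Type*} [DecidableEq ι] (s : Finset ι) (x : ι → ℝ)

lemma sigmaEOn_zero : sigmaEOn s 0 x = 1 := by
  simp [sigmaEOn]

lemma sigmaEOn_one : sigmaEOn s 1 x = ∑ i ∈ s, x i := by
  simp [sigmaEOn, Finset.powersetCard_one, Finset.sum_map]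

lemma sigmaEOn_of_card_lt {k : ℕ} (h : s.card < k) : sigmaEOn s k x = 0 := by
  rw [sigmaEOn, Finset.powersetCard_eq_empty.2 h, Finset.sum_empty]

lemma sigmaEOn_congr {y : ι → ℝ} (h : ∀ i ∈ s, x i = y i) (k : ℕ) :
    sigmaEOn s k x = sigmaEOn s k y := by
  refine Finset.sum_congr rfl fun t ht => Finset.prod_congr rfl fun i hi => ?_
  exact h i ((Finset.mem_powersetCard.1 ht).1 hi)

lemma sigmaEOn_esymm (k : ℕ) : sigmaEOn s k x = (s.val.map x).esymm k := by
  rw [Finset.esymm_map_val]; rfl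

/-- deletion identity (C). -/
lemma sigmaEOn_erase {i : ι} (hi : i ∈ s) (k : ℕ) :
    sigmaEOn s (k + 1) x
      = sigmaEOn (s.erase i) (k + 1) x + x i * sigmaEOn (s.erase i) k x := by
  classical
  conv_lhs => rw [sigmaEOn, ← Finset.insert_erase hi,
    Finset.powersetCard_succ_insert (Finset.notMem_erase i s)]
  rw [Finset.sum_union]
  · congr 1
    rw [Finset.sum_image ?inj]
    case inj =>
      intro t ht u hu htu
      have hit : i ∉ t := fun h => (Finset.mem_erase.1 ((Finset.mem_powersetCard.1 ht).1 h)).1 rfl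
      have hiu : i ∉ u := fun h => (Finset.mem_erase.1 ((Finset.mem_powersetCard.1 hu).1 h)).1 rfl
      rw [← Finset.erase_insert hit, htu, Finset.erase_insert hiu]
    rw [sigmaEOn, Finset.mul_sum]
    refine Finset.sum_congr rfl fun t ht => ?_
    have hit : i ∉ t := fun h => (Finset.mem_erase.1 ((Finset.mem_powersetCard.1 ht).1 h)).1 rfl
    rw [Finset.prod_insert hit]
  · rw [Finset.disjoint_right]
    intro t ht ht'
    obtain ⟨u, hu, rfl⟩ := Finset.mem_image.1 ht
    have : i ∈ insert i u := Finset.mem_insert_self i u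
    exact (Finset.mem_erase.1 ((Finset.mem_powersetCard.1 ht').1 this)).1 rfl

/-- summed deletion identity (A). -/
lemma sum_sigmaEOn_erase (k : ℕ) (hk : k ≤ s.card) :
    ∑ i ∈ s, sigmaEOn (s.erase i) k x = ((s.card : ℝ) - k) * sigmaEOn s k x := by
  classical
  have key : ∀ i ∈ s, sigmaEOn (s.erase i) k x
      = ∑ t ∈ (s.powersetCard k).filter (fun t => i ∉ t), ∏ j ∈ t, x j := by
    intro i _
    rw [sigmaEOn]
    congr 1
    ext t
    simp only [Finset.mem_powersetCard, Finset.mem_filter, Finset.subset_erase]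
    tauto
  rw [Finset.sum_congr rfl key]
  simp_rw [Finset.sum_filter]
  rw [Finset.sum_comm]
  rw [sigmaEOn, Finset.mul_sum]
  refine Finset.sum_congr rfl fun t ht => ?_
  obtain ⟨hts, htc⟩ := Finset.mem_powersetCard.1 ht
  rw [← Finset.sum_filter]
  have hfil : s.filter (fun i => i ∉ t) = s \ t := by
    ext j; simp [Finset.mem_sdiff]
  rw [hfil, Finset.sum_const, Finset.card_sdiff_of_subset hts, htc, nsmul_eq_mul]
  rw [Nat.cast_sub hk]
end basic

section bpart
variable {ι : Type*} [DecidableEq ι] (s : Finset ι) (x : ι → ℝ)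

/-- weighted summed deletion identity (B). -/
lemma sum_mul_sigmaEOn_erase (k : ℕ) (hk1 : 1 ≤ k) (hk : k ≤ s.card) :
    ∑ i ∈ s, x i * sigmaEOn (s.erase i) (k - 1) x = (k : ℝ) * sigmaEOn s k x := by
  obtain ⟨m, rfl⟩ : ∃ m, k = m + 1 := ⟨k - 1, (Nat.succ_pred_eq_of_pos hk1).symm⟩
  have key : ∀ i ∈ s, x i * sigmaEOn (s.erase i) (m + 1 - 1) x
      = sigmaEOn s (m + 1) x - sigmaEOn (s.erase i) (m + 1) x := by
    intro i hi
    have := sigmaEOn_erase s x hi m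
    simp only [Nat.add_sub_cancel]
    linarith
  rw [Finset.sum_congr rfl key, Finset.sum_sub_distrib, sum_sigmaEOn_erase s x (m + 1) hk,
    Finset.sum_const, nsmul_eq_mul]
  ring

lemma multiset_prod_pos (M : Multiset ℝ) (h : ∀ a ∈ M, 0 < a) : 0 < M.prod := by
  induction M using Multiset.induction with
  | empty => simp
  | cons a t ih =>
    rw [Multiset.prod_cons]
    exact mul_pos (h a (Multiset.mem_cons_self a t))
      (ih fun b hb => h b (Multiset.mem_cons_of_mem hb))

lemma multiset_sum_pos (M : Multiset ℝ) (h : ∀ a ∈ M, 0 < a) (hne : M ≠ 0) : 0 < M.sum := by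
  induction M using Multiset.induction with
  | empty => exact absurd rfl hne
  | cons a t _ =>
    rw [Multiset.sum_cons]
    have ht : 0 ≤ t.sum := Multiset.sum_nonneg fun b hb => (h b (Multiset.mem_cons_of_mem hb)).le
    have := h a (Multiset.mem_cons_self a t)
    linarith

lemma esymm_pos (M : Multiset ℝ) (hpos : ∀ a ∈ M, 0 < a) (j : ℕ) (hj : j ≤ Multiset.card M) :
    0 < M.esymm j := by
  rw [Multiset.esymm]
  refine multiset_sum_pos _ (fun a ha => ?_) ?_
  · obtain ⟨t, ht, rfl⟩ := Multiset.mem_map.1 ha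
    have hsub := (Multiset.mem_powersetCard.1 ht).1
    exact multiset_prod_pos _ fun b hb => hpos b (Multiset.mem_of_le hsub hb)
  · intro h0
    have hc := Multiset.card_powersetCard j M
    have h1 : Multiset.card ((Multiset.powersetCard j M).map Multiset.prod) = 0 := by
      rw [h0]; rfl
    rw [Multiset.card_map, hc] at h1
    exact absurd h1 (Nat.choose_pos hj).ne'

end bpart

lemma real_rooted_iterate (p : Polynomial ℝ) (hp : Multiset.card p.roots = p.natDegree) :
    ∀ d, d ≤ p.natDegree →
      Multiset.card (Polynomial.derivative^[d] p).roots = (Polynomial.derivative^[d] p).natDegree ∧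
      (Polynomial.derivative^[d] p).natDegree = p.natDegree - d := by
  intro d
  induction d with
  | zero => intro _; exact ⟨hp, rfl⟩
  | succ d ih =>
    intro hd
    obtain ⟨h1, h2⟩ := ih (Nat.le_of_succ_le hd)
    set q := Polynomial.derivative^[d] p with hq
    have hqdeg : 1 ≤ q.natDegree := by omega
    have hstep : Polynomial.derivative^[d + 1] p = Polynomial.derivative q := by
      rw [Function.iterate_succ_apply']
    have hub : (Polynomial.derivative q).natDegree ≤ q.natDegree - 1 :=
      Polynomial.natDegree_derivative_le q
    have hlb : q.natDegree - 1 ≤ Multiset.card (Polynomial.derivative q).roots := by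
      have := Polynomial.card_roots_le_derivative q
      omega
    have hcr : Multiset.card (Polynomial.derivative q).roots ≤ (Polynomial.derivative q).natDegree :=
      Polynomial.card_roots' _
    constructor
    · rw [hstep]; omega
    · rw [hstep]; omega

lemma boundary {ι : Type*} [DecidableEq ι] (s : Finset ι) (x : ι → ℝ) (m : ℕ)
    (hm1 : 1 ≤ m) (hm : m ≤ s.card)
    (hnn : ∀ j, 1 ≤ j → j ≤ m - 1 → 0 ≤ sigmaEOn s j x)
    (hpos : 0 < sigmaEOn s m x) :
    ∀ j, 1 ≤ j → j ≤ m → 0 < sigmaEOn s j x := by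
  classical
  set N := s.card with hN
  set M : Multiset ℝ := s.val.map x with hM
  have hMcard : Multiset.card M = N := by simp [hM, hN]
  have hsig : ∀ j, sigmaEOn s j x = M.esymm j := fun j => sigmaEOn_esymm s x j
  set T : Multiset ℝ := M.map (fun a => -a) with hT
  have hTcard : Multiset.card T = N := by simp [hT, hMcard]
  set P : Polynomial ℝ := (T.map (fun r => Polynomial.X - Polynomial.C r)).prod with hP
  have hPT : P = (M.map (fun r => Polynomial.X + Polynomial.C r)).prod := by
    rw [hP, hT, Multiset.map_map]
    congr 1
    refine Multiset.map_congr rfl fun a _ => ?_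
    simp [sub_neg_eq_add]
  have hProots : P.roots = T := Polynomial.roots_multiset_prod_X_sub_C T
  have hPdeg : P.natDegree = N := by
    rw [hP, Polynomial.natDegree_multiset_prod_X_sub_C_eq_card, hTcard]
  have hPcoeff : ∀ j, j ≤ N → P.coeff (N - j) = M.esymm j := by
    intro j hj
    rw [hPT, Multiset.prod_X_add_C_coeff M (by omega : N - j ≤ Multiset.card M), hMcard,
      Nat.sub_sub_self hj]
  set Q : Polynomial ℝ := Polynomial.derivative^[N - m] P with hQ
  obtain ⟨hQroots, hQdeg⟩ :=
    real_rooted_iterate P (by rw [hProots, hPdeg, hTcard]) (N - m) (by omega)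
  rw [hPdeg] at hQdeg
  have hQdeg' : Q.natDegree = m := by rw [hQ, hQdeg]; omega
  have hc : ∀ j : ℕ, j ≤ m → (0:ℝ) < ((N - j).descFactorial (N - m) : ℝ) := by
    intro j hj
    have h0 : (N - j).descFactorial (N - m) ≠ 0 := by
      rw [Ne, Nat.descFactorial_eq_zero_iff_lt]
      omega
    exact_mod_cast Nat.pos_of_ne_zero h0
  have hQcoeff : ∀ j, j ≤ m →
      Q.coeff (m - j) = ((N - j).descFactorial (N - m) : ℝ) * M.esymm j := by
    intro j hj
    rw [hQ, Polynomial.coeff_iterate_derivative,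
      show m - j + (N - m) = N - j by omega, hPcoeff j (by omega), nsmul_eq_mul]
  have hesymm0 : M.esymm 0 = 1 := by
    simp [Multiset.esymm, Multiset.powersetCard_zero_left]
  have hQlead : 0 < Q.leadingCoeff := by
    rw [Polynomial.leadingCoeff, hQdeg', show m = m - 0 by omega, hQcoeff 0 (by omega), hesymm0,
      mul_one]
    exact hc 0 (by omega)
  have hQne : Q ≠ 0 := fun h => by simp [h] at hQlead
  -- all roots of Q are negative
  have hrootsneg : ∀ r ∈ Q.roots, r < 0 := by
    intro r hr
    by_contra hrge
    push_neg at hrge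
    have heval : Q.eval r = 0 := (Polynomial.mem_roots'.1 hr).2
    have hsum : Q.eval r = ∑ d ∈ Finset.range (m + 1), Q.coeff d * r ^ d := by
      rw [Polynomial.eval_eq_sum_range, hQdeg']
    have hterm : ∀ d ∈ Finset.range (m + 1), 0 ≤ Q.coeff d * r ^ d := by
      intro d hd
      rw [Finset.mem_range] at hd
      have hdm : d ≤ m := by omega
      have hco : Q.coeff d = ((N - (m - d)).descFactorial (N - m) : ℝ) * M.esymm (m - d) := by
        have h' := hQcoeff (m - d) (by omega)
        rwa [show m - (m - d) = d by omega] at h'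
      have he : 0 ≤ M.esymm (m - d) := by
        rcases Nat.eq_zero_or_pos (m - d) with h0 | hpos'
        · rw [h0, hesymm0]; norm_num
        · rcases Nat.lt_or_ge (m - d) m with hlt | hge
          · have := hnn (m - d) hpos' (by omega)
            rwa [hsig] at this
          · have : m - d = m := by omega
            rw [this]
            exact (by rwa [hsig] at hpos : (0:ℝ) < M.esymm m).le
      rw [hco]
      exact mul_nonneg (mul_nonneg (hc (m - d) (by omega)).le he) (pow_nonneg hrge d)
    have hzero : 0 < Q.eval r := by
      rw [hsum]
      refine Finset.sum_pos' hterm ⟨0, Finset.mem_range.2 (by omega), ?_⟩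
      have h0 := hQcoeff m le_rfl
      rw [Nat.sub_self] at h0
      rw [pow_zero, mul_one, h0]
      exact mul_pos (hc m le_rfl) (by rwa [hsig] at hpos)
    exact absurd heval hzero.ne'
  -- factor Q and conclude positivity of coefficients
  have hfac : Polynomial.C Q.leadingCoeff *
      (Q.roots.map (fun a => Polynomial.X - Polynomial.C a)).prod = Q :=
    Polynomial.C_leadingCoeff_mul_prod_multiset_X_sub_C (by exact hQroots)
  intro j hj1 hj2
  rw [hsig]
  set R : Multiset ℝ := Q.roots.map (fun a => -a) with hR
  have hRcard : Multiset.card R = m := by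
    rw [hR, Multiset.card_map]
    rw [hQroots, hQdeg']
  have hRfac : (Q.roots.map (fun a => Polynomial.X - Polynomial.C a)).prod
      = (R.map (fun r => Polynomial.X + Polynomial.C r)).prod := by
    rw [hR, Multiset.map_map]
    congr 1
    refine Multiset.map_congr rfl fun a _ => ?_
    simp [sub_eq_add_neg]
  have hRpos : ∀ a ∈ R, 0 < a := by
    intro a ha
    obtain ⟨r, hr, rfl⟩ := Multiset.mem_map.1 ha
    have := hrootsneg r hr
    linarith
  have hcoeffpos : 0 < Q.coeff (m - j) := by
    rw [← hfac, hRfac, Polynomial.coeff_C_mul,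
      Multiset.prod_X_add_C_coeff R (by omega : m - j ≤ Multiset.card R), hRcard,
      Nat.sub_sub_self hj2]
    exact mul_pos hQlead (esymm_pos R hRpos j (by omega))
  have := hQcoeff j hj2
  rw [this] at hcoeffpos
  have hcj := hc j hj2
  by_contra hcon
  push_neg at hcon
  nlinarith


/-- Deletion lemma: deleting an entry of a vector in `Γ_m` lands in `Γ_{m-1}`. -/
lemma gd {ι : Type*} [DecidableEq ι] :
    ∀ (m : ℕ) (s : Finset ι) (x : ι → ℝ), m ≤ s.card →
      (∀ j, 1 ≤ j → j ≤ m → 0 < sigmaEOn s j x) →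
      ∀ i ∈ s, ∀ j, 1 ≤ j → j ≤ m - 1 → 0 < sigmaEOn (s.erase i) j x := by
  intro m
  induction m with
  | zero => intro s x _ _ i hi j hj1 hj2; omega
  | succ m ih =>
    intro s x hcard hcone i hi j hj1 hj2
    simp only [Nat.add_sub_cancel] at hj2
    rcases Nat.lt_or_ge j m with hjm | hjm
    · exact ih s x (by omega) (fun j' h1 h2 => hcone j' h1 (by omega)) i hi j hj1 (by omega)
    have hjeq : j = m := by omega
    rw [hjeq]
    by_contra hcon
    push_neg at hcon
    set d : ℕ → ℝ := fun j => sigmaEOn (s.erase i) (j - 1) x with hd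
    set c : ℕ → ℝ := fun j => sigmaEOn s j x with hc
    have hcpos : ∀ j', 1 ≤ j' → j' ≤ m + 1 → 0 < c j' := hcone
    have hd1 : d 1 = 1 := by simp [hd, sigmaEOn_zero]
    have hdpos : ∀ j', 2 ≤ j' → j' ≤ m → 0 < d j' := by
      intro j' h2 hm'
      exact ih s x (by omega) (fun a h1 h2' => hcone a h1 (by omega)) i hi (j' - 1)
        (by omega) (by omega)
    have hdm1 : d (m + 1) ≤ 0 := by
      simpa [hd] using hcon
    set F := (Finset.Icc 1 (m + 1)).filter (fun j' => 0 < d j') with hF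
    have h1F : 1 ∈ F := by
      simp only [hF, Finset.mem_filter, Finset.mem_Icc, hd1]
      exact ⟨⟨le_rfl, by omega⟩, one_pos⟩
    obtain ⟨js, hjsF, hmin⟩ := F.exists_min_image (fun j' => c j' / d j') ⟨1, h1F⟩
    obtain ⟨hjsIcc, hjsd⟩ := Finset.mem_filter.1 hjsF
    rw [Finset.mem_Icc] at hjsIcc
    have hjsc : 0 < c js := hcpos js hjsIcc.1 hjsIcc.2
    set a : ℝ := -(c js / d js) with ha
    have ha0 : a < 0 := by
      rw [ha, neg_neg_iff_pos.symm.symm]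
      have := div_pos hjsc hjsd
      linarith
    set y := Function.update x i (x i + a) with hy
    have herase : ∀ j', sigmaEOn (s.erase i) j' y = sigmaEOn (s.erase i) j' x := by
      intro j'
      refine sigmaEOn_congr _ _ (fun b hb => ?_) j'
      rw [hy, Function.update_of_ne (Finset.mem_erase.1 hb).1]
    have hsy : ∀ j', 1 ≤ j' → sigmaEOn s j' y = c j' + a * d j' := by
      intro j' h1
      obtain ⟨jj, rfl⟩ : ∃ jj, j' = jj + 1 := ⟨j' - 1, by omega⟩
      have hYE := sigmaEOn_erase s y hi jj
      have hXE := sigmaEOn_erase s x hi jj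
      rw [hYE, herase, herase, hy, Function.update_self]
      have hdj : d (jj + 1) = sigmaEOn (s.erase i) jj x := by simp [hd]
      have hcj : c (jj + 1) = sigmaEOn s (jj + 1) x := rfl
      rw [hdj, hcj, hXE]
      ring
    have hbdy := boundary s y (m + 1) (by omega) hcard ?hnn ?hpos js hjsIcc.1 hjsIcc.2
    case hnn =>
      intro j' h1 h2
      simp only [Nat.add_sub_cancel] at h2
      rw [hsy j' h1]
      rcases lt_or_ge 0 (d j') with hdj | hdj
      · have hj'F : j' ∈ F := by
          simp only [hF, Finset.mem_filter, Finset.mem_Icc]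
          exact ⟨⟨h1, by omega⟩, hdj⟩
        have hdiv : c js / d js ≤ c j' / d j' := hmin j' hj'F
        have : 0 ≤ c j' / d j' + a := by rw [ha]; linarith
        have hexp : c j' + a * d j' = d j' * (c j' / d j' + a) := by
          field_simp
        rw [hexp]
        exact mul_nonneg hdj.le this
      · have hcj' : 0 < c j' := hcpos j' h1 (by omega)
        nlinarith
    case hpos =>
      rw [hsy (m + 1) (by omega)]
      have hcm : 0 < c (m + 1) := hcpos (m + 1) (by omega) le_rfl
      nlinarith
    rw [hsy js hjsIcc.1] at hbdy
    have : c js + a * d js = 0 := by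
      rw [ha]
      field_simp
      ring
    linarith


/-- if `λ ∈ Γ_k` is arranged nonincreasingly, then
`λ_1 σ_{k-1}(λ|1) ≥ (k/n) σ_k(λ)`. -/
theorem top_eigen_times_sigma_ge (n k : ℕ) (hn : 0 < n) (hk1 : 1 ≤ k) (hkn : k ≤ n)
    (lam : Fin n → ℝ) (hlam : lam ∈ gardingCone n k) (hdec : Antitone lam) :
    (k : ℝ) / (n : ℝ) * sigmaE k lam ≤
      lam ⟨0, hn⟩ * sigmaEOn (Finset.univ.erase ⟨0, hn⟩) (k - 1) lam := by
  classical
  set i₁ : Fin n := ⟨0, hn⟩ with hi₁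
  have hcone : ∀ j, 1 ≤ j → j ≤ k → 0 < sigmaEOn Finset.univ j lam := hlam
  have hucard : (Finset.univ : Finset (Fin n)).card = n := by simp
  have hmax : ∀ i, lam i ≤ lam i₁ := by
    intro i
    exact hdec (by simp [hi₁, Fin.le_def])
  have hl1 : 0 < lam i₁ := by
    have h1 := hcone 1 le_rfl hk1
    rw [sigmaEOn_one] at h1
    have hsum : ∑ i : Fin n, lam i ≤ ∑ _i : Fin n, lam i₁ :=
      Finset.sum_le_sum fun i _ => hmax i
    rw [Finset.sum_const, hucard, nsmul_eq_mul] at hsum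
    have hn' : (0:ℝ) < n := by exact_mod_cast hn
    nlinarith
  set s' : Finset (Fin n) := Finset.univ.erase i₁ with hs'
  have hs'card : s'.card = n - 1 := by
    rw [hs', Finset.card_erase_of_mem (Finset.mem_univ i₁), hucard]
  have hskm1 : 0 < sigmaEOn s' (k - 1) lam := by
    rcases Nat.lt_or_ge (k - 1) 1 with h | h
    · have : k - 1 = 0 := by omega
      rw [this, sigmaEOn_zero]; norm_num
    · exact gd k Finset.univ lam (by omega) hcone i₁ (Finset.mem_univ i₁) (k - 1) h le_rfl
  have hCid : sigmaEOn Finset.univ k lam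
      = sigmaEOn s' k lam + lam i₁ * sigmaEOn s' (k - 1) lam := by
    have := sigmaEOn_erase Finset.univ lam (Finset.mem_univ i₁) (k - 1)
    rwa [Nat.sub_add_cancel hk1] at this
  have hn' : (0:ℝ) < n := by exact_mod_cast hn
  suffices h : (k:ℝ) * sigmaEOn Finset.univ k lam
      ≤ (n:ℝ) * (lam i₁ * sigmaEOn s' (k - 1) lam) by
    rw [div_mul_eq_mul_div, div_le_iff₀ hn']
    calc (k:ℝ) * sigmaE k lam ≤ (n:ℝ) * (lam i₁ * sigmaEOn s' (k-1) lam) := h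
    _ = lam i₁ * sigmaEOn s' (k-1) lam * n := by ring
  have hk0 : (0:ℝ) < k := by exact_mod_cast hk1
  have hkn'' : (k:ℝ) ≤ n := by exact_mod_cast hkn
  rcases le_or_gt (sigmaEOn s' k lam) 0 with hsk | hsk
  · have hprod : 0 ≤ lam i₁ * sigmaEOn s' (k - 1) lam := (mul_pos hl1 hskm1).le
    rw [hCid]
    nlinarith
  · -- second case: the truncated vector is in Γ_k of dimension n-1
    have hkn1 : k ≤ n - 1 := by
      by_contra hcontra
      have hlt : s'.card < k := by omega
      rw [sigmaEOn_of_card_lt s' lam hlt] at hsk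
      exact absurd hsk (lt_irrefl 0)
    have hcone' : ∀ j, 1 ≤ j → j ≤ k → 0 < sigmaEOn s' j lam := by
      intro j h1 h2
      rcases Nat.lt_or_ge j k with hjk | hjk
      · exact gd k Finset.univ lam (by omega) hcone i₁ (Finset.mem_univ i₁) j h1 (by omega)
      · have : j = k := by omega
        rwa [this]
    have hB := sum_mul_sigmaEOn_erase s' lam k hk1 (by omega)
    have hA := sum_sigmaEOn_erase s' lam (k - 1) (by omega)
    have hper : ∀ i ∈ s', lam i * sigmaEOn (s'.erase i) (k - 1) lam
        ≤ lam i₁ * sigmaEOn (s'.erase i) (k - 1) lam := by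
      intro i hi
      have hnn : 0 ≤ sigmaEOn (s'.erase i) (k - 1) lam := by
        rcases Nat.lt_or_ge (k - 1) 1 with h | h
        · have : k - 1 = 0 := by omega
          rw [this, sigmaEOn_zero]; norm_num
        · exact (gd k s' lam (by omega) hcone' i hi (k - 1) h le_rfl).le
      exact mul_le_mul_of_nonneg_right (hmax i) hnn
    have hsumle : (k:ℝ) * sigmaEOn s' k lam
        ≤ lam i₁ * (((s'.card : ℝ) - ((k-1:ℕ):ℝ)) * sigmaEOn s' (k - 1) lam) := by
      rw [← hB, ← hA, Finset.mul_sum]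
      exact Finset.sum_le_sum fun i hi => by
        have := hper i hi
        linarith
    have hcoef : ((s'.card : ℝ) - ((k-1:ℕ):ℝ)) = (n:ℝ) - k := by
      rw [hs'card, Nat.cast_sub hn, Nat.cast_sub hk1]
      push_cast
      ring
    rw [hcoef] at hsumle
    rw [hCid]
    nlinarith
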